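/- Let M be a subspace of a real vector space E, x₀ ∉ M, f₀ linear on M, S sublinear and P superlinear on E. Define a = sup_{y∈M}(f₀(y) − S(y−x₀)), b = inf_{y∈M}(−f₀(y) + S(y+x₀)), c = inf_{y∈M}(f₀(y) − P(y−x₀)), d = sup_{y∈M}(−f₀(y) + P(y+x₀)), and assume a ≤ b and d ≤ c. Then f₀(x) ≤ S(x+y) − P(y) for all x ∈ M and y ∈ span(M ∪ {x₀}) holds if and only if a ≤ c and d ≤ b. -/

import Mathlib

theorem interval_condition_iff {E : Type*} [AddCommGroup E] [Module ℝ E]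
    (M : Submodule ℝ E) (x₀ : E) (hx₀ : x₀ ∉ M) (S P : E → ℝ) (f₀ : M →ₗ[ℝ] ℝ)
    (hSadd : ∀ x y : E, S (x + y) ≤ S x + S y)
    (hSpos : ∀ (α : ℝ), 0 < α → ∀ x : E, S (α • x) = α * S x)
    (hPadd : ∀ x y : E, P x + P y ≤ P (x + y))
    (hPpos : ∀ (α : ℝ), 0 < α → ∀ x : E, P (α • x) = α * P x)
    (ha : BddAbove (Set.range fun y : M => f₀ y - S (↑y - x₀)))
    (hb : BddBelow (Set.range fun y : M => -f₀ y + S (↑y + x₀)))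
    (hc : BddBelow (Set.range fun y : M => f₀ y - P (↑y - x₀)))
    (hd : BddAbove (Set.range fun y : M => -f₀ y + P (↑y + x₀)))
    (hab : (⨆ y : M, (f₀ y - S (↑y - x₀))) ≤ ⨅ y : M, (-f₀ y + S (↑y + x₀)))
    (hdc : (⨆ y : M, (-f₀ y + P (↑y + x₀))) ≤ ⨅ y : M, (f₀ y - P (↑y - x₀))) :
    (∀ (x : M) (y : E), y ∈ M ⊔ Submodule.span ℝ {x₀} → f₀ x ≤ S (↑x + y) - P y) ↔
      ((⨆ y : M, (f₀ y - S (↑y - x₀))) ≤ ⨅ y : M, (f₀ y - P (↑y - x₀))) ∧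
        (⨆ y : M, (-f₀ y + P (↑y + x₀))) ≤ ⨅ y : M, (-f₀ y + S (↑y + x₀)) := by
  have hM : Nonempty M := ⟨0⟩
  constructor
  · intro h
    constructor
    · apply ciSup_le; intro u
      apply le_ciInf; intro v
      have hmem : (↑v - x₀ : E) ∈ M ⊔ Submodule.span ℝ {x₀} := by
        apply Submodule.sub_mem
        · exact Submodule.mem_sup_left v.2
        · exact Submodule.mem_sup_right (Submodule.mem_span_singleton_self x₀)
      have := h (u - v) (↑v - x₀) hmem
      have he : (↑(u - v) : E) + (↑v - x₀) = ↑u - x₀ := by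
        push_cast; abel
      rw [he, map_sub] at this
      linarith
    · apply ciSup_le; intro u
      apply le_ciInf; intro v
      have hmem : (↑u + x₀ : E) ∈ M ⊔ Submodule.span ℝ {x₀} := by
        apply Submodule.add_mem
        · exact Submodule.mem_sup_left u.2
        · exact Submodule.mem_sup_right (Submodule.mem_span_singleton_self x₀)
      have := h (v - u) (↑u + x₀) hmem
      have he : (↑(v - u) : E) + (↑u + x₀) = ↑v + x₀ := by
        push_cast; abel
      rw [he, map_sub] at this
      linarith
  · rintro ⟨hac, hdb⟩ x y hy
    have key1 : ∀ u v : M, f₀ u - S (↑u - x₀) ≤ f₀ v - P (↑v - x₀) := fun u v =>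
      le_trans (le_trans (le_ciSup ha u) hac) (ciInf_le hc v)
    have key2 : ∀ u v : M, -f₀ u + P (↑u + x₀) ≤ -f₀ v + S (↑v + x₀) := fun u v =>
      le_trans (le_trans (le_ciSup hd u) hdb) (ciInf_le hb v)
    obtain ⟨m, hm, z, hz, rfl⟩ := Submodule.mem_sup.1 hy
    obtain ⟨t, rfl⟩ := Submodule.mem_span_singleton.1 hz
    set m' : M := ⟨m, hm⟩ with hm'
    rcases lt_trichotomy t 0 with ht | ht | ht
    · -- t < 0
      set s : ℝ := -t with hs
      have hspos : 0 < s := by simp [hs]; linarith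
      set u : M := s⁻¹ • (x + m') with hu
      set v : M := s⁻¹ • m' with hv
      have h1 := key1 u v
      have e1 : s • ((↑u : E) - x₀) = ↑x + (m + t • x₀) := by
        rw [hu]
        push_cast
        rw [smul_sub, smul_smul, mul_inv_cancel₀ hspos.ne', one_smul]
        rw [hs]
        module
      have e2 : s • ((↑v : E) - x₀) = m + t • x₀ := by
        rw [hv]
        push_cast
        rw [smul_sub, smul_smul, mul_inv_cancel₀ hspos.ne', one_smul]
        rw [hs]
        module
      have hS1 : S (↑x + (m + t • x₀)) = s * S ((↑u : E) - x₀) := by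
        rw [← e1, hSpos s hspos]
      have hP1 : P (m + t • x₀) = s * P ((↑v : E) - x₀) := by
        rw [← e2, hPpos s hspos]
      have hfu : f₀ u = s⁻¹ * (f₀ x + f₀ m') := by
        rw [hu, map_smul, map_add]; simp [smul_eq_mul]
      have hfv : f₀ v = s⁻¹ * f₀ m' := by
        rw [hv, map_smul]; simp [smul_eq_mul]
      rw [hfu, hfv] at h1
      rw [hS1, hP1]
      have h1' := mul_le_mul_of_nonneg_left h1 hspos.le
      rw [mul_sub, mul_sub, ← mul_assoc, ← mul_assoc,
        mul_inv_cancel₀ hspos.ne', one_mul, one_mul] at h1'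
      linarith
    · -- t = 0
      rw [ht, zero_smul, add_zero]
      -- goal : f₀ x ≤ S (↑x + m) - P m
      have keyr : ∀ r : ℝ, 0 < r →
          r * (f₀ x + P m - S ((↑x : E) + m)) ≤ S x₀ - P x₀ := by
        intro r hr
        have h2 := key2 (r • m') (r • (x + m'))
        have hfu : f₀ (r • m') = r * f₀ m' := by rw [map_smul]; simp [smul_eq_mul]
        have hfv : f₀ (r • (x + m')) = r * (f₀ x + f₀ m') := by
          rw [map_smul, map_add]; simp [smul_eq_mul]
        have hPge : r * P m + P x₀ ≤ P ((↑(r • m') : E) + x₀) := by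
          have := hPadd (r • m) x₀
          rw [hPpos r hr] at this
          simpa using this
        have hSle : S ((↑(r • (x + m')) : E) + x₀) ≤ r * S ((↑x : E) + m) + S x₀ := by
          have := hSadd (r • ((↑x : E) + m)) x₀
          rw [hSpos r hr] at this
          have he : (↑(r • (x + m')) : E) + x₀ = r • ((↑x : E) + m) + x₀ := by
            push_cast; rfl
          rw [he]
          exact this
        rw [hfu, hfv] at h2
        nlinarith
      by_contra hcon
      push_neg at hcon
      set L : ℝ := f₀ x + P m - S ((↑x : E) + m) with hL
      have hLpos : 0 < L := by rw [hL]; linarith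
      have h1 := keyr 1 one_pos
      have hCpos : 0 < S x₀ - P x₀ := by linarith
      have h2 := keyr (2 * (S x₀ - P x₀) / L) (by positivity)
      rw [div_mul_cancel₀ _ hLpos.ne'] at h2
      linarith
    · -- t > 0
      set u : M := t⁻¹ • m' with hu
      set v : M := t⁻¹ • (x + m') with hv
      have h2 := key2 u v
      have e1 : t • ((↑v : E) + x₀) = ↑x + (m + t • x₀) := by
        rw [hv]
        push_cast
        rw [smul_add, smul_smul, mul_inv_cancel₀ ht.ne', one_smul]
        module
      have e2 : t • ((↑u : E) + x₀) = m + t • x₀ := by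
        rw [hu]
        push_cast
        rw [smul_add, smul_smul, mul_inv_cancel₀ ht.ne', one_smul]
      have hS1 : S (↑x + (m + t • x₀)) = t * S ((↑v : E) + x₀) := by
        rw [← e1, hSpos t ht]
      have hP1 : P (m + t • x₀) = t * P ((↑u : E) + x₀) := by
        rw [← e2, hPpos t ht]
      have hfu : f₀ u = t⁻¹ * f₀ m' := by rw [hu, map_smul]; simp [smul_eq_mul]
      have hfv : f₀ v = t⁻¹ * (f₀ x + f₀ m') := by
        rw [hv, map_smul, map_add]; simp [smul_eq_mul]
      rw [hfu, hfv] at h2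
      rw [hS1, hP1]
      have h2' := mul_le_mul_of_nonneg_left h2 ht.le
      rw [mul_add, mul_add, mul_neg, mul_neg, ← mul_assoc, ← mul_assoc,
        mul_inv_cancel₀ ht.ne', one_mul, one_mul] at h2'
      linarith
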